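/- arXiv:2102.01136 — 2 statements merged into one kernel-verified Lean document; each statement's English description precedes it below -/
import Mathlib

section
/- Let d ≥ 1, α ∈ (1,2), γ₀ > 0, R₀ ∈ (0,1], and let a ∈ L_{1,loc}(ℝ^{d+1}) satisfy: for every (t₀,x₀) ∈ ℝ^{d+1} and every 0 < ρ ≤ R₀, ⨍_{Q_ρ(t₀,x₀)} |a − (a)_{Q_ρ(t₀,x₀)}| ≤ γ₀, where Q_ρ(t,x) = (t − ρ^{2/α}, t) × B_ρ(x) and (a)_Q denotes the average of a over Q. Then there is a constant N = N(α,d) such that for every (t₀,x₀) ∈ ℝ^{d+1}, every r with 0 < r ≤ 2^{−α/2}R₀, and every h ≥ r^{2/α}, one has ⨍_{t₀−h}^{t₀} ⨍_{B_r(x₀)} |a − ā| dx dt ≤ N·h·r^{−2/α}·γ₀, where ā = ⨍_{Q_r(t₀,x₀)} a. -/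
open MeasureTheory Real
open scoped ENNReal

noncomputable section

abbrev Esp (d : ℕ) := EuclideanSpace ℝ (Fin d)

/-- Parabolic cylinder `Q_r(t,x) = (t - r^{2/α}, t) × B_r(x)`. -/
def pCyl (d : ℕ) (α r t : ℝ) (x : Esp d) : Set (ℝ × Esp d) :=
  Set.Ioo (t - r ^ (2 / α)) t ×ˢ Metric.ball x r

/-- Small mean oscillation assumption with parameters `(γ, R)`. -/
def SMO (d : ℕ) (α γ R : ℝ) (a : Fin d → Fin d → ℝ → Esp d → ℝ) : Prop :=
  ∀ (i j : Fin d) (t₀ : ℝ) (x₀ : Esp d) (r : ℝ), 0 < r → r ≤ R →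
    ⨍ z in pCyl d α r t₀ x₀,
      |a i j z.1 z.2 - ⨍ z' in pCyl d α r t₀ x₀, a i j z'.1 z'.2| ≤ γ

/-- Ellipticity/boundedness assumption with constant `δ`. -/
def Elliptic (d : ℕ) (δ : ℝ) (a : Fin d → Fin d → ℝ → Esp d → ℝ)
    (b : Fin d → ℝ → Esp d → ℝ) (c : ℝ → Esp d → ℝ) : Prop :=
  ∀ (t : ℝ) (x : Esp d),
    (∀ ξ : Fin d → ℝ, δ * ∑ i, ξ i ^ 2 ≤ ∑ i, ∑ j, a i j t x * ξ i * ξ j) ∧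
    (∀ i j, |a i j t x| ≤ δ⁻¹) ∧ (∀ i, |b i t x| ≤ δ⁻¹) ∧ |c t x| ≤ δ⁻¹

/-- `A_p` weight on `ℝ` with constant at most `K`. -/
def ApReal (p K : ℝ) (w : ℝ → ℝ) : Prop :=
  (∀ t, 0 ≤ w t) ∧
  ∀ (t₀ r : ℝ), 0 < r →
    (⨍ t in Metric.ball t₀ r, w t) *
      (⨍ t in Metric.ball t₀ r, w t ^ (-1 / (p - 1))) ^ (p - 1) ≤ K

/-- `A_q` weight on a domain `D ⊆ ℝ^d` with constant at most `K`. -/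
def AqDom (d : ℕ) (q K : ℝ) (D : Set (Esp d)) (w : Esp d → ℝ) : Prop :=
  (∀ x, 0 ≤ w x) ∧
  ∀ x₀ ∈ D, ∀ r : ℝ, 0 < r →
    (⨍ x in Metric.ball x₀ r ∩ D, w x) *
      (⨍ x in Metric.ball x₀ r ∩ D, w x ^ (-1 / (q - 1))) ^ (q - 1) ≤ K

/-- Weighted mixed norm `‖f‖_{L_{p,q,w}((0,T)×D)}`. -/
def mixedNormE (d : ℕ) (p q T : ℝ) (D : Set (Esp d)) (w₁ : ℝ → ℝ) (w₂ : Esp d → ℝ)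
    (f : ℝ → Esp d → ℝ) : ℝ≥0∞ :=
  (∫⁻ t in Set.Ioo (0 : ℝ) T,
      (∫⁻ x in D, ENNReal.ofReal (|f t x| ^ q * w₂ x)) ^ (p / q) *
        ENNReal.ofReal (w₁ t)) ^ (1 / p)

/-- Caputo fractional derivative of order `α ∈ (1,2)` (zero initial data). -/
def caputo (d : ℕ) (α : ℝ) (u : ℝ → Esp d → ℝ) (t : ℝ) (x : Esp d) : ℝ :=
  (Real.Gamma (2 - α))⁻¹ *
    ∫ s in Set.Ioo (0 : ℝ) t, (t - s) ^ (1 - α) * deriv (deriv (fun τ => u τ x)) s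

/-- First spatial partial derivative `D_i u`. -/
def Dp (d : ℕ) (i : Fin d) (u : ℝ → Esp d → ℝ) (t : ℝ) (x : Esp d) : ℝ :=
  fderiv ℝ (u t) x (EuclideanSpace.single i 1)

/-- Second spatial partial derivative `D_{ij} u`. -/
def Dpp (d : ℕ) (i j : Fin d) (u : ℝ → Esp d → ℝ) (t : ℝ) (x : Esp d) : ℝ :=
  fderiv ℝ (fun y => fderiv ℝ (u t) y (EuclideanSpace.single j 1)) x
    (EuclideanSpace.single i 1)

/-- `|Du|`. -/
def gradNorm (d : ℕ) (u : ℝ → Esp d → ℝ) (t : ℝ) (x : Esp d) : ℝ :=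
  ‖fderiv ℝ (u t) x‖

/-- `|D²u|`. -/
def hessNorm (d : ℕ) (u : ℝ → Esp d → ℝ) (t : ℝ) (x : Esp d) : ℝ :=
  ‖iteratedFDeriv ℝ 2 (u t) x‖

/-- `u ∈ C^∞([0,T] × D̄)`, vanishing for large `|x|`, with zero initial conditions. -/
def SmoothZeroInit (d : ℕ) (T : ℝ) (D : Set (Esp d)) (u : ℝ → Esp d → ℝ) : Prop :=
  ContDiffOn ℝ (⊤ : ℕ∞) (fun z : ℝ × Esp d => u z.1 z.2) (Set.Icc 0 T ×ˢ closure D) ∧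
  (∃ R : ℝ, ∀ t x, R ≤ ‖x‖ → u t x = 0) ∧
  (∀ x, u 0 x = 0) ∧ (∀ x, derivWithin (fun s => u s x) (Set.Ici 0) 0 = 0)


/-- Average-minus-constant bound via oscillation over a superset. -/
lemma avg_diff_le {X : Type*} [MeasurableSpace X] (μ : Measure X) (f : X → ℝ)
    (S S' : Set X) (hSS : S ⊆ S') (hf : IntegrableOn f S' μ) (c : ℝ)
    (h0 : μ S ≠ 0) (hfin : μ S' ≠ ⊤) :
    |(⨍ x in S, f x ∂μ) - c| ≤ (μ S).toReal⁻¹ * ∫ x in S', |f x - c| ∂μ := by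
  have hSfin : μ S ≠ ⊤ := fun h => hfin (top_le_iff.mp (h ▸ measure_mono hSS))
  have hpos : 0 < (μ S).toReal := ENNReal.toReal_pos h0 hSfin
  have hfS : IntegrableOn f S μ := hf.mono_set hSS
  have hcS : IntegrableOn (fun _ => c) S μ :=
    integrableOn_const hSfin
  have hcS' : IntegrableOn (fun _ => c) S' μ :=
    integrableOn_const hfin
  have habs : IntegrableOn (fun x => |f x - c|) S' μ := (hf.sub hcS').abs
  have key : (⨍ x in S, f x ∂μ) - c = (μ S).toReal⁻¹ * ∫ x in S, (f x - c) ∂μ := by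
    rw [integral_sub hfS hcS, setIntegral_const, setAverage_eq, smul_eq_mul, smul_eq_mul,
      mul_sub]
    congr 1
    field_simp
    rfl
  rw [key, abs_mul, abs_of_nonneg (by positivity)]
  gcongr
  calc |∫ x in S, (f x - c) ∂μ| ≤ ∫ x in S, |f x - c| ∂μ := by
        simpa using norm_integral_le_integral_norm (μ := μ.restrict S) (fun x => f x - c)
    _ ≤ ∫ x in S', |f x - c| ∂μ := by
        apply setIntegral_mono_set habs
        · filter_upwards with x using abs_nonneg _
        · exact HasSubset.Subset.eventuallyLE hSS

lemma iUnion_Ioc_range (t τ : ℝ) (hτ : 0 ≤ τ) (n : ℕ) :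
    (⋃ k ∈ Finset.range n, Set.Ioc (t - ((k : ℝ) + 1) * τ) (t - (k : ℝ) * τ))
      = Set.Ioc (t - (n : ℝ) * τ) t := by
  induction n with
  | zero => simp
  | succ n ih =>
    rw [Finset.range_add_one]
    simp only [Finset.mem_insert, Set.iUnion_iUnion_eq_or_left]
    rw [ih, Set.Ioc_union_Ioc_eq_Ioc (by nlinarith [n.cast_nonneg (α := ℝ)])
      (by nlinarith [n.cast_nonneg (α := ℝ)])]
    push_cast
    ring_nf


set_option maxHeartbeats 1000000 in
/-- Control of the mean oscillation over time-elongated cylinders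
for a locally integrable function with small mean oscillation over parabolic
cylinders. -/
theorem stmt7 (d : ℕ) (hd : 0 < d) (α : ℝ) (hα : α ∈ Set.Ioo (1 : ℝ) 2) :
    ∃ N : ℝ, 0 < N ∧
      ∀ (γ₀ R₀ : ℝ), 0 < γ₀ → R₀ ∈ Set.Ioc (0 : ℝ) 1 →
        ∀ a : ℝ × Esp d → ℝ, LocallyIntegrable a volume →
          (∀ (t₀ : ℝ) (x₀ : Esp d) (ρ : ℝ), 0 < ρ → ρ ≤ R₀ →
            ⨍ z in pCyl d α ρ t₀ x₀,
              |a z - ⨍ z' in pCyl d α ρ t₀ x₀, a z'| ≤ γ₀) →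
          ∀ (t₀ : ℝ) (x₀ : Esp d) (r h : ℝ), 0 < r → r ≤ (2 : ℝ) ^ (-(α / 2)) * R₀ →
            r ^ (2 / α) ≤ h →
            ⨍ z in Set.Ioo (t₀ - h) t₀ ×ˢ Metric.ball x₀ r,
                |a z - ⨍ z' in pCyl d α r t₀ x₀, a z'|
              ≤ N * h * r ^ (-(2 / α)) * γ₀ := by
  obtain ⟨hα1, hα2⟩ := hα
  haveI : Nonempty (Fin d) := ⟨⟨0, hd⟩⟩
  set C₁ : ℝ := 2 ^ (d + 1) with hC₁def
  have hC₁pos : (0 : ℝ) < C₁ := by positivity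
  refine ⟨2 + 8 * C₁, by positivity, ?_⟩
  intro γ₀ R₀ hγ hR a ha hSMO t₀ x₀ r h hr hrR hhr
  have hα0 : (0 : ℝ) < α := by linarith
  set τ : ℝ := r ^ (2 / α) with hτdef
  have hτ : 0 < τ := Real.rpow_pos_of_pos hr _
  have hh : 0 < h := lt_of_lt_of_le hτ hhr
  -- the larger radius
  set r' : ℝ := 2 ^ (α / 2) * r with hr'def
  have h2pos : (0 : ℝ) < 2 ^ (α / 2) := Real.rpow_pos_of_pos two_pos _
  have hr' : 0 < r' := by positivity
  have hrr' : r ≤ r' := by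
    have h1 : (1 : ℝ) ≤ 2 ^ (α / 2) := by
      calc (1 : ℝ) = 2 ^ (0 : ℝ) := (Real.rpow_zero 2).symm
      _ ≤ 2 ^ (α / 2) := Real.rpow_le_rpow_of_exponent_le one_le_two (by linarith)
    nlinarith
  have hr'2 : r' ≤ 2 * r := by
    have h1 : (2 : ℝ) ^ (α / 2) ≤ 2 := by
      calc (2 : ℝ) ^ (α / 2) ≤ 2 ^ (1 : ℝ) :=
            Real.rpow_le_rpow_of_exponent_le one_le_two (by linarith)
      _ = 2 := Real.rpow_one 2
    nlinarith
  have hr'R : r' ≤ R₀ := by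
    have h1 : (2 : ℝ) ^ (α / 2) * ((2:ℝ) ^ (-(α / 2)) * R₀) = R₀ := by
      rw [← mul_assoc, ← Real.rpow_add two_pos]
      simp
    calc r' = 2 ^ (α / 2) * r := rfl
    _ ≤ 2 ^ (α / 2) * ((2:ℝ) ^ (-(α / 2)) * R₀) := by nlinarith
    _ = R₀ := h1
  have hrR₀ : r ≤ R₀ := le_trans hrr' hr'R
  have hτ' : r' ^ (2 / α) = 2 * τ := by
    rw [hr'def, Real.mul_rpow (by positivity) hr.le, ← hτdef]
    congr 1
    rw [← Real.rpow_mul (by norm_num : (0:ℝ) ≤ 2),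
      show α / 2 * (2 / α) = 1 by field_simp, Real.rpow_one]
  -- volumes
  have hvol : ∀ (s ρ : ℝ), volume (pCyl d α ρ s x₀)
      = ENNReal.ofReal (ρ ^ (2 / α)) * volume (Metric.ball x₀ ρ) := by
    intro s ρ
    rw [pCyl, Measure.volume_eq_prod, Measure.prod_prod, Real.volume_Ioo, sub_sub_cancel]
  have hQpos : ∀ (s ρ : ℝ), 0 < ρ →
      volume (pCyl d α ρ s x₀) ≠ 0 ∧ volume (pCyl d α ρ s x₀) ≠ ⊤ := by
    intro s ρ hρ
    rw [hvol]
    constructor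
    · exact mul_ne_zero (ENNReal.ofReal_pos.mpr (Real.rpow_pos_of_pos hρ _)).ne'
        (Metric.measure_ball_pos volume x₀ hρ).ne'
    · exact ENNReal.mul_ne_top ENNReal.ofReal_ne_top measure_ball_lt_top.ne
  set vBt : ℝ := (volume (Metric.ball x₀ r)).toReal with hvBt
  have hvBtpos : 0 < vBt := ENNReal.toReal_pos (Metric.measure_ball_pos volume x₀ hr).ne'
    measure_ball_lt_top.ne
  set vBt' : ℝ := (volume (Metric.ball x₀ r')).toReal with hvBt'
  have hvBt'nn : 0 ≤ vBt' := ENNReal.toReal_nonneg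
  have hQt : ∀ s : ℝ, (volume (pCyl d α r s x₀)).toReal = τ * vBt := by
    intro s
    rw [hvol, ENNReal.toReal_mul, ENNReal.toReal_ofReal hτ.le]
  have hQ't : ∀ s : ℝ, (volume (pCyl d α r' s x₀)).toReal = 2 * τ * vBt' := by
    intro s
    rw [hvol, hτ', ENNReal.toReal_mul, ENNReal.toReal_ofReal (by positivity)]
  -- ball doubling
  have hball2 : vBt' ≤ 2 ^ d * vBt := by
    have hk : Module.finrank ℝ (Esp d) = d := finrank_euclideanSpace_fin
    have h1 : volume (Metric.ball x₀ r') ≤ ENNReal.ofReal (2 ^ d) * volume (Metric.ball x₀ r) := by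
      calc volume (Metric.ball x₀ r') ≤ volume (Metric.ball x₀ (2 * r)) :=
            measure_mono (Metric.ball_subset_ball hr'2)
      _ = ENNReal.ofReal ((2 * r) ^ Module.finrank ℝ (Esp d)) * volume (Metric.ball (0 : Esp d) 1) :=
            Measure.addHaar_ball volume x₀ (by linarith)
      _ = ENNReal.ofReal (2 ^ d) *
            (ENNReal.ofReal (r ^ Module.finrank ℝ (Esp d)) * volume (Metric.ball (0 : Esp d) 1)) := by
            rw [hk, mul_pow, ENNReal.ofReal_mul (by positivity), mul_assoc]
      _ = ENNReal.ofReal (2 ^ d) * volume (Metric.ball x₀ r) := by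
            rw [Measure.addHaar_ball volume x₀ hr.le]
    calc vBt' ≤ (ENNReal.ofReal (2 ^ d) * volume (Metric.ball x₀ r)).toReal :=
          ENNReal.toReal_mono (ENNReal.mul_ne_top ENNReal.ofReal_ne_top
            measure_ball_lt_top.ne) h1
    _ = 2 ^ d * vBt := by
          rw [ENNReal.toReal_mul, ENNReal.toReal_ofReal (by positivity)]
  -- integrability
  have intOn : ∀ S : Set (ℝ × Esp d), Bornology.IsBounded S → IntegrableOn a S volume :=
    fun S hS => (ha.integrableOn_isCompact hS.isCompact_closure).mono_set subset_closure
  have Sfin : ∀ S : Set (ℝ × Esp d), Bornology.IsBounded S → volume S < ⊤ :=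
    fun S hS => lt_of_le_of_lt (measure_mono subset_closure)
      hS.isCompact_closure.measure_lt_top
  have gInt : ∀ S : Set (ℝ × Esp d), Bornology.IsBounded S → ∀ c : ℝ,
      IntegrableOn (fun z => |a z - c|) S volume :=
    fun S hS c => ((intOn S hS).sub (integrableOn_const (Sfin S hS).ne)).abs
  have bQ : ∀ (s ρ : ℝ), Bornology.IsBounded (pCyl d α ρ s x₀) :=
    fun s ρ => (Metric.isBounded_Ioo _ _).prod Metric.isBounded_ball
  have bIoc : ∀ (u v ρ : ℝ), Bornology.IsBounded (Set.Ioc u v ×ˢ Metric.ball x₀ ρ) :=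
    fun u v ρ => (Metric.isBounded_Ioc _ _).prod Metric.isBounded_ball
  have bIoo : ∀ (u v ρ : ℝ), Bornology.IsBounded (Set.Ioo u v ×ˢ Metric.ball x₀ ρ) :=
    fun u v ρ => (Metric.isBounded_Ioo _ _).prod Metric.isBounded_ball
  -- oscillation bound in integral form
  have hosc : ∀ (s ρ : ℝ), 0 < ρ → ρ ≤ R₀ →
      ∫ z in pCyl d α ρ s x₀, |a z - ⨍ z' in pCyl d α ρ s x₀, a z'|
        ≤ γ₀ * (volume (pCyl d α ρ s x₀)).toReal := by
    intro s ρ hρ hρR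
    have h1 := hSMO s x₀ ρ hρ hρR
    rw [setAverage_eq, smul_eq_mul, measureReal_def] at h1
    have hpos : 0 < (volume (pCyl d α ρ s x₀)).toReal :=
      ENNReal.toReal_pos (hQpos s ρ hρ).1 (hQpos s ρ hρ).2
    have h2 := mul_le_mul_of_nonneg_left h1 hpos.le
    rwa [← mul_assoc, mul_inv_cancel₀ hpos.ne', one_mul, mul_comm] at h2
  -- averages
  set m : ℝ → ℝ := fun s => ⨍ z in pCyl d α r s x₀, a z with hm
  set m' : ℝ → ℝ := fun s => ⨍ z in pCyl d α r' s x₀, a z with hm'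
  -- key one-step estimate
  have hkey : ∀ s u : ℝ, pCyl d α r u x₀ ⊆ pCyl d α r' s x₀ → |m u - m' s| ≤ C₁ * γ₀ := by
    intro s u hsub
    have h1 := avg_diff_le volume a _ _ hsub (intOn _ (bQ s r')) (m' s)
      (hQpos u r hr).1 (hQpos s r' hr').2
    refine (h1.trans ?_)
    have h2 : ∫ z in pCyl d α r' s x₀, |a z - m' s|
        ≤ γ₀ * (volume (pCyl d α r' s x₀)).toReal := hosc s r' hr' hr'R
    calc (volume (pCyl d α r u x₀)).toReal⁻¹ * ∫ z in pCyl d α r' s x₀, |a z - m' s|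
        ≤ (volume (pCyl d α r u x₀)).toReal⁻¹ * (γ₀ * (volume (pCyl d α r' s x₀)).toReal) := by
          exact mul_le_mul_of_nonneg_left h2 (by positivity)
    _ = (τ * vBt)⁻¹ * (γ₀ * (2 * τ * vBt')) := by rw [hQt, hQ't]
    _ ≤ C₁ * γ₀ := by
          rw [hC₁def]
          have h3 : (τ * vBt)⁻¹ * (γ₀ * (2 * τ * vBt')) = 2 * γ₀ * (vBt' / vBt) := by
            field_simp
          rw [h3]
          have h4 : vBt' / vBt ≤ 2 ^ d := by
            rw [div_le_iff₀ hvBtpos]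
            nlinarith
          calc 2 * γ₀ * (vBt' / vBt) ≤ 2 * γ₀ * 2 ^ d := by gcongr
          _ = 2 ^ (d + 1) * γ₀ := by ring
  -- subset facts
  have hsub1 : ∀ s : ℝ, pCyl d α r s x₀ ⊆ pCyl d α r' s x₀ := by
    intro s
    rw [pCyl, pCyl, hτ', ← hτdef]
    exact Set.prod_mono (Set.Ioo_subset_Ioo (by linarith) le_rfl)
      (Metric.ball_subset_ball hrr')
  have hsub2 : ∀ s : ℝ, pCyl d α r (s - τ) x₀ ⊆ pCyl d α r' s x₀ := by
    intro s
    rw [pCyl, pCyl, hτ', ← hτdef]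
    exact Set.prod_mono (Set.Ioo_subset_Ioo (by linarith) (by linarith))
      (Metric.ball_subset_ball hrr')
  -- chained average estimate
  have hstepB : ∀ k : ℕ, |m (t₀ - k * τ) - m t₀| ≤ 2 * C₁ * k * γ₀ := by
    intro k
    induction k with
    | zero => simp
    | succ k ih =>
      have e1 : t₀ - ((k : ℝ) + 1) * τ = (t₀ - k * τ) - τ := by ring
      have h1 : |m ((t₀ - k * τ) - τ) - m' (t₀ - k * τ)| ≤ C₁ * γ₀ := hkey _ _ (hsub2 _)
      have h2 : |m (t₀ - k * τ) - m' (t₀ - k * τ)| ≤ C₁ * γ₀ := hkey _ _ (hsub1 _)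
      have t1 := abs_sub_le (m ((t₀ - k * τ) - τ)) (m' (t₀ - k * τ)) (m (t₀ - k * τ))
      have t2 := abs_sub_le (m ((t₀ - k * τ) - τ)) (m (t₀ - k * τ)) (m t₀)
      have h3 : |m' (t₀ - k * τ) - m (t₀ - k * τ)| = |m (t₀ - k * τ) - m' (t₀ - k * τ)| :=
        abs_sub_comm _ _
      push_cast
      rw [e1]
      push_cast at ih
      linarith
  -- covering by unit cylinders in time
  set n : ℕ := ⌈h / τ⌉₊ with hndef
  have hnnn : (0:ℝ) ≤ (n:ℝ) := Nat.cast_nonneg n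
  have hhn : h ≤ (n:ℝ) * τ := by
    rw [← div_le_iff₀ hτ]
    exact Nat.le_ceil _
  have hn2 : (n : ℝ) * τ ≤ 2 * h := by
    have h1 : (n : ℝ) < h / τ + 1 := Nat.ceil_lt_add_one (by positivity)
    have h4 : (h / τ + 1) * τ = h + τ := by field_simp
    have h5 : (n:ℝ) * τ ≤ (h/τ + 1) * τ := mul_le_mul_of_nonneg_right h1.le hτ.le
    rw [h4] at h5
    linarith
  have hmono : ∫ z in Set.Ioo (t₀ - h) t₀ ×ˢ Metric.ball x₀ r, |a z - m t₀|
      ≤ ∫ z in Set.Ioc (t₀ - (n:ℝ) * τ) t₀ ×ˢ Metric.ball x₀ r, |a z - m t₀| := by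
    apply setIntegral_mono_set (gInt _ (bIoc _ _ _) _)
      (Filter.Eventually.of_forall fun z => abs_nonneg _)
    apply HasSubset.Subset.eventuallyLE
    refine Set.prod_mono (fun x hx => ⟨?_, hx.2.le⟩) subset_rfl
    have := hx.1
    linarith
  have hdecomp : ∫ z in Set.Ioc (t₀ - (n:ℝ) * τ) t₀ ×ˢ Metric.ball x₀ r, |a z - m t₀|
      = ∑ k ∈ Finset.range n,
          ∫ z in Set.Ioc (t₀ - ((k:ℝ) + 1) * τ) (t₀ - (k:ℝ) * τ) ×ˢ Metric.ball x₀ r,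
            |a z - m t₀| := by
    rw [← iUnion_Ioc_range t₀ τ hτ.le n]
    rw [show (⋃ k ∈ Finset.range n, Set.Ioc (t₀ - ((k:ℝ)+1)*τ) (t₀ - (k:ℝ)*τ)) ×ˢ
          Metric.ball x₀ r
        = ⋃ k ∈ Finset.range n,
            (Set.Ioc (t₀ - ((k:ℝ)+1)*τ) (t₀ - (k:ℝ)*τ) ×ˢ Metric.ball x₀ r) by
      simp [Set.iUnion_prod_const]]
    apply integral_biUnion_finset
    · exact fun i _ => measurableSet_Ioc.prod measurableSet_ball
    · intro i hi j hj hij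
      simp only [Function.onFun]
      apply Set.disjoint_prod.mpr
      left
      rw [Set.Ioc_disjoint_Ioc]
      rcases hij.lt_or_gt with hlt | hlt
      · have hij1 : (i:ℝ) + 1 ≤ j := by exact_mod_cast hlt
        calc (t₀ - (i:ℝ)*τ) ⊓ (t₀ - (j:ℝ)*τ) ≤ t₀ - (j:ℝ)*τ := inf_le_right
        _ ≤ t₀ - ((i:ℝ)+1)*τ := by nlinarith
        _ ≤ _ := le_sup_left
      · have hij1 : (j:ℝ) + 1 ≤ i := by exact_mod_cast hlt
        calc (t₀ - (i:ℝ)*τ) ⊓ (t₀ - (j:ℝ)*τ) ≤ t₀ - (i:ℝ)*τ := inf_le_left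
        _ ≤ t₀ - ((j:ℝ)+1)*τ := by nlinarith
        _ ≤ _ := le_sup_right
    · exact fun i _ => gInt _ (bIoc _ _ _) _
  -- Ioc vs Ioo in time is a.e. irrelevant
  have haeeq : ∀ u v : ℝ,
      (Set.Ioc u v ×ˢ Metric.ball x₀ r : Set (ℝ × Esp d))
        =ᶠ[ae volume] Set.Ioo u v ×ˢ Metric.ball x₀ r := by
    intro u v
    rw [MeasureTheory.ae_eq_set]
    constructor
    · apply measure_mono_null
        (show (Set.Ioc u v ×ˢ Metric.ball x₀ r : Set (ℝ × Esp d)) \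
            (Set.Ioo u v ×ˢ Metric.ball x₀ r) ⊆ ({v} : Set ℝ) ×ˢ Metric.ball x₀ r from ?_)
      · rw [Measure.volume_eq_prod, Measure.prod_prod, Real.volume_singleton, zero_mul]
      · rintro ⟨z1, z2⟩ ⟨⟨hz1, hz2⟩, hz3⟩
        refine ⟨?_, hz2⟩
        by_contra hne
        exact hz3 ⟨⟨hz1.1, lt_of_le_of_ne hz1.2 hne⟩, hz2⟩
    · rw [Set.diff_eq_empty.mpr (Set.prod_mono Set.Ioo_subset_Ioc_self subset_rfl)]
      exact measure_empty
  -- bound on each piece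
  have hterm : ∀ k : ℕ, k < n →
      ∫ z in Set.Ioc (t₀ - ((k:ℝ)+1)*τ) (t₀ - (k:ℝ)*τ) ×ˢ Metric.ball x₀ r, |a z - m t₀|
        ≤ (τ * vBt) * (γ₀ * (1 + 2 * C₁ * (n:ℝ))) := by
    intro k hk
    have e0 : t₀ - ((k:ℝ)+1)*τ = t₀ - (k:ℝ)*τ - τ := by ring
    have e1 : Set.Ioo (t₀ - (k:ℝ)*τ - τ) (t₀ - (k:ℝ)*τ) ×ˢ Metric.ball x₀ r
        = pCyl d α r (t₀ - (k:ℝ)*τ) x₀ := by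
      rw [pCyl, ← hτdef]
    have step1 : ∫ z in Set.Ioc (t₀ - ((k:ℝ)+1)*τ) (t₀ - (k:ℝ)*τ) ×ˢ Metric.ball x₀ r,
          |a z - m t₀| = ∫ z in pCyl d α r (t₀ - (k:ℝ)*τ) x₀, |a z - m t₀| := by
      rw [e0, ← e1]
      exact setIntegral_congr_set (haeeq _ _)
    rw [step1]
    set s : ℝ := t₀ - (k:ℝ)*τ with hs
    have tri : ∀ z : ℝ × Esp d, |a z - m t₀| ≤ |a z - m s| + |m s - m t₀| := by
      intro z
      have := abs_sub_le (a z) (m s) (m t₀)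
      linarith
    have hQfin : volume (pCyl d α r s x₀) < ⊤ := lt_top_iff_ne_top.mpr (hQpos s r hr).2
    have step2 : ∫ z in pCyl d α r s x₀, |a z - m t₀|
        ≤ (∫ z in pCyl d α r s x₀, |a z - m s|) + (τ * vBt) * |m s - m t₀| := by
      have hint1 : IntegrableOn (fun z => |a z - m s|) (pCyl d α r s x₀) volume :=
        gInt _ (bQ _ _) _
      have hint2 : IntegrableOn (fun _ : ℝ × Esp d => |m s - m t₀|) (pCyl d α r s x₀) volume :=
        integrableOn_const hQfin.ne
      calc ∫ z in pCyl d α r s x₀, |a z - m t₀|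
          ≤ ∫ z in pCyl d α r s x₀, (|a z - m s| + |m s - m t₀|) :=
            integral_mono (gInt _ (bQ _ _) _) (hint1.add hint2) tri
      _ = (∫ z in pCyl d α r s x₀, |a z - m s|) + (τ * vBt) * |m s - m t₀| := by
            rw [integral_add hint1 hint2, setIntegral_const, smul_eq_mul, measureReal_def, hQt]
    have step3 : ∫ z in pCyl d α r s x₀, |a z - m s| ≤ γ₀ * (τ * vBt) := by
      have := hosc s r hr hrR₀
      rwa [hQt] at this
    have step4 : |m s - m t₀| ≤ 2 * C₁ * (n:ℝ) * γ₀ := by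
      have h1 := hstepB k
      have hkn : (k:ℝ) ≤ (n:ℝ) := by exact_mod_cast hk.le
      have h2 : 2 * C₁ * (k:ℝ) * γ₀ ≤ 2 * C₁ * (n:ℝ) * γ₀ := by gcongr
      exact le_trans h1 h2
    calc ∫ z in pCyl d α r s x₀, |a z - m t₀|
        ≤ γ₀ * (τ * vBt) + (τ * vBt) * (2 * C₁ * (n:ℝ) * γ₀) := by
          refine step2.trans (add_le_add step3 ?_)
          have : (0:ℝ) ≤ τ * vBt := by positivity
          exact mul_le_mul_of_nonneg_left step4 this
    _ = (τ * vBt) * (γ₀ * (1 + 2 * C₁ * (n:ℝ))) := by ring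
  have hfinal_int : ∫ z in Set.Ioo (t₀ - h) t₀ ×ˢ Metric.ball x₀ r, |a z - m t₀|
      ≤ (n:ℝ) * ((τ * vBt) * (γ₀ * (1 + 2 * C₁ * (n:ℝ)))) := by
    refine (hmono.trans_eq hdecomp).trans ?_
    calc ∑ k ∈ Finset.range n,
          ∫ z in Set.Ioc (t₀ - ((k:ℝ)+1)*τ) (t₀ - (k:ℝ)*τ) ×ˢ Metric.ball x₀ r, |a z - m t₀|
        ≤ ∑ _k ∈ Finset.range n, (τ * vBt) * (γ₀ * (1 + 2 * C₁ * (n:ℝ))) :=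
          Finset.sum_le_sum (fun k hk => hterm k (Finset.mem_range.mp hk))
    _ = (n:ℝ) * ((τ * vBt) * (γ₀ * (1 + 2 * C₁ * (n:ℝ)))) := by
          rw [Finset.sum_const, Finset.card_range, nsmul_eq_mul]
  -- conclude
  rw [setAverage_eq, smul_eq_mul]
  have hIoo_vol : (volume (Set.Ioo (t₀ - h) t₀ ×ˢ Metric.ball x₀ r)).toReal = h * vBt := by
    rw [Measure.volume_eq_prod, Measure.prod_prod, Real.volume_Ioo, sub_sub_cancel,
      ENNReal.toReal_mul, ENNReal.toReal_ofReal hh.le]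
  rw [measureReal_def, hIoo_vol, Real.rpow_neg hr.le, ← hτdef]
  have harith : (h * vBt)⁻¹ * ((n:ℝ) * ((τ * vBt) * (γ₀ * (1 + 2 * C₁ * (n:ℝ)))))
      ≤ (2 + 8 * C₁) * h * τ⁻¹ * γ₀ := by
    rw [inv_mul_le_iff₀ (by positivity)]
    have e : (h * vBt) * ((2 + 8 * C₁) * h * τ⁻¹ * γ₀) = (h * vBt * (2 + 8 * C₁) * h * γ₀) / τ := by
      rw [div_eq_mul_inv]
      ring
    rw [e, le_div_iff₀ hτ]
    have k1 : (n:ℝ) * τ * τ ≤ 2 * h * h := by nlinarith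
    have k2 : ((n:ℝ) * τ) * ((n:ℝ) * τ) ≤ (2 * h) * (2 * h) := by nlinarith
    have key2 : (n:ℝ) * τ * τ * (1 + 2 * C₁ * (n:ℝ)) ≤ (2 + 8 * C₁) * (h * h) := by
      nlinarith [mul_le_mul_of_nonneg_left k2 hC₁pos.le]
    nlinarith [mul_le_mul_of_nonneg_left key2 (by positivity : (0:ℝ) ≤ vBt * γ₀)]
  exact le_trans (mul_le_mul_of_nonneg_left hfinal_int (by positivity)) harith
end
end

section
/- There is an absolute constant N > 0 such that for every p ∈ [1,∞), every T > 0, every ε > 0, and every u ∈ C²([0,∞)) with u(0) = 0 and u′(0) = 0, one has ‖u′‖_{L_p(0,T)} ≤ N·ε^{−1}·‖u‖_{L_p(0,T)} + ε·‖u″‖_{L_p(0,T)}. In particular, N does not depend on u, p, ε, or T. -/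
open MeasureTheory Real Set
open scoped ENNReal NNReal

section calc19
variable {u : ℝ → ℝ}

lemma cd1 (hu : ContDiffOn ℝ 2 u (Set.Ici 0)) :
    ContDiffOn ℝ 1 (derivWithin u (Set.Ici 0)) (Set.Ici 0) :=
  hu.derivWithin (uniqueDiffOn_Ici 0) (by norm_num)

lemma hasD1 (hu : ContDiffOn ℝ 2 u (Set.Ici 0)) {x : ℝ} (hx : 0 < x) :
    HasDerivAt u (derivWithin u (Set.Ici 0) x) x := by
  have h1 : DifferentiableOn ℝ u (Set.Ici 0) := hu.differentiableOn (by norm_num)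
  have := (h1 x hx.le).hasDerivWithinAt
  exact this.hasDerivAt (Ici_mem_nhds hx)

lemma deriv_eq_D1 (hu : ContDiffOn ℝ 2 u (Set.Ici 0)) {x : ℝ} (hx : 0 < x) :
    deriv u x = derivWithin u (Set.Ici 0) x := (hasD1 hu hx).deriv

lemma hasD2 (hu : ContDiffOn ℝ 2 u (Set.Ici 0)) {x : ℝ} (hx : 0 < x) :
    HasDerivAt (derivWithin u (Set.Ici 0))
      (derivWithin (derivWithin u (Set.Ici 0)) (Set.Ici 0) x) x := by
  have h1 : DifferentiableOn ℝ (derivWithin u (Set.Ici 0)) (Set.Ici 0) :=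
    (cd1 hu).differentiableOn one_ne_zero
  exact (h1 x hx.le).hasDerivWithinAt.hasDerivAt (Ici_mem_nhds hx)

lemma deriv2_eq_D2 (hu : ContDiffOn ℝ 2 u (Set.Ici 0)) {x : ℝ} (hx : 0 < x) :
    deriv (deriv u) x = derivWithin (derivWithin u (Set.Ici 0)) (Set.Ici 0) x := by
  have : deriv u =ᶠ[nhds x] derivWithin u (Set.Ici 0) := by
    filter_upwards [Ioi_mem_nhds hx] with y hy
    exact deriv_eq_D1 hu hy
  exact ((hasD2 hu hx).congr_of_eventuallyEq this).deriv

lemma cont_D2 (hu : ContDiffOn ℝ 2 u (Set.Ici 0)) :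
    ContinuousOn (derivWithin (derivWithin u (Set.Ici 0)) (Set.Ici 0)) (Set.Ici 0) := by
  have h : ContDiffOn ℝ 0 (derivWithin (derivWithin u (Set.Ici 0)) (Set.Ici 0)) (Set.Ici 0) :=
    (cd1 hu).derivWithin (uniqueDiffOn_Ici 0) (by norm_num)
  exact h.continuousOn

/-- FTC for u : `u b - u a = ∫ D1` for `0 ≤ a ≤ b`. -/
lemma ftc_u (hu : ContDiffOn ℝ 2 u (Set.Ici 0)) {a b : ℝ} (ha : 0 ≤ a) (hab : a ≤ b) :
    ∫ s in a..b, derivWithin u (Set.Ici 0) s = u b - u a := by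
  apply intervalIntegral.integral_eq_sub_of_hasDeriv_right_of_le hab
  · exact hu.continuousOn.mono (fun x hx => le_trans ha hx.1)
  · intro x hx
    exact (hasD1 hu (lt_of_le_of_lt ha hx.1)).hasDerivWithinAt
  · apply ContinuousOn.intervalIntegrable
    apply (cd1 hu).continuousOn.mono
    rw [Set.uIcc_of_le hab]
    exact fun x hx => le_trans ha hx.1

/-- FTC for D1. -/
lemma ftc_D1 (hu : ContDiffOn ℝ 2 u (Set.Ici 0)) {a b : ℝ} (ha : 0 ≤ a) (hab : a ≤ b) :
    ∫ s in a..b, derivWithin (derivWithin u (Set.Ici 0)) (Set.Ici 0) s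
      = derivWithin u (Set.Ici 0) b - derivWithin u (Set.Ici 0) a := by
  apply intervalIntegral.integral_eq_sub_of_hasDeriv_right_of_le hab
  · exact (cd1 hu).continuousOn.mono (fun x hx => le_trans ha hx.1)
  · intro x hx
    exact (hasD2 hu (lt_of_le_of_lt ha hx.1)).hasDerivWithinAt
  · apply ContinuousOn.intervalIntegrable
    apply (cont_D2 hu).mono
    rw [Set.uIcc_of_le hab]
    exact fun x hx => le_trans ha hx.1

end calc19

section pointwise
variable {u : ℝ → ℝ}

lemma L1 (hu : ContDiffOn ℝ 2 u (Set.Ici 0)) (hu0 : derivWithin u (Set.Ici 0) 0 = 0)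
    {t : ℝ} (ht : 0 < t) :
    |deriv u t| ≤ ∫ s in (0:ℝ)..t, |derivWithin (derivWithin u (Set.Ici 0)) (Set.Ici 0) s| := by
  rw [deriv_eq_D1 hu ht]
  have h := ftc_D1 hu (le_refl 0) ht.le
  rw [hu0, sub_zero] at h
  rw [← h]
  calc |∫ s in (0:ℝ)..t, derivWithin (derivWithin u (Set.Ici 0)) (Set.Ici 0) s|
      ≤ ∫ s in (0:ℝ)..t, |derivWithin (derivWithin u (Set.Ici 0)) (Set.Ici 0) s| :=
        intervalIntegral.abs_integral_le_integral_abs ht.le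

lemma L2 (hu : ContDiffOn ℝ 2 u (Set.Ici 0)) {a t : ℝ} (ha : 0 < a) (hat : a < t) :
    |deriv u t| ≤ (t - a)⁻¹ * |u t| + (t - a)⁻¹ * |u a|
      + ∫ s in a..t, |derivWithin (derivWithin u (Set.Ici 0)) (Set.Ici 0) s| := by
  set D1 := derivWithin u (Set.Ici 0) with hD1def
  set D2 := derivWithin D1 (Set.Ici 0) with hD2def
  set δ := t - a with hδ
  have hδ0 : 0 < δ := by simp only [hδ]; linarith
  set C := ∫ s in a..t, |D2 s| with hC
  have hD1cont : ContinuousOn D1 (Set.Icc a t) :=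
    (cd1 hu).continuousOn.mono (fun x hx => le_trans ha.le hx.1)
  have hD1int : IntervalIntegrable D1 volume a t := by
    apply ContinuousOn.intervalIntegrable
    rwa [Set.uIcc_of_le hat.le]
  have hD2int : IntervalIntegrable (fun s => |D2 s|) volume a t := by
    apply ContinuousOn.intervalIntegrable
    rw [Set.uIcc_of_le hat.le]
    exact ((cont_D2 hu).mono (fun x hx => le_trans ha.le hx.1)).abs
  have hsplit : ∫ s in a..t, (D1 t - D1 s) = δ * D1 t - (u t - u a) := by
    rw [intervalIntegral.integral_sub intervalIntegrable_const hD1int,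
      intervalIntegral.integral_const, ftc_u hu ha.le hat.le]
    simp only [smul_eq_mul, hδ]
  have hbound : ∀ s ∈ Set.uIoc a t, ‖D1 t - D1 s‖ ≤ C := by
    intro s hs
    rw [Set.uIoc_of_le hat.le] at hs
    have h1 : D1 t - D1 s = ∫ r in s..t, D2 r := (ftc_D1 hu (le_trans ha.le hs.1.le) hs.2).symm
    rw [Real.norm_eq_abs, h1]
    calc |∫ r in s..t, D2 r| ≤ ∫ r in s..t, |D2 r| :=
          intervalIntegral.abs_integral_le_integral_abs hs.2
      _ ≤ C := by
          apply intervalIntegral.integral_mono_interval hs.1.le hs.2 le_rfl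
          · filter_upwards with r using abs_nonneg _
          · exact hD2int
  have hnorm := intervalIntegral.norm_integral_le_of_norm_le_const hbound
  rw [Real.norm_eq_abs] at hnorm
  have habs : |t - a| = δ := abs_of_pos hδ0
  rw [habs] at hnorm
  have key : δ * |D1 t| ≤ |u t| + |u a| + C * δ := by
    have h2 : δ * D1 t = (u t - u a) + ∫ s in a..t, (D1 t - D1 s) := by rw [hsplit]; ring
    have h3 : |δ * D1 t| ≤ |u t - u a| + C * δ := by
      rw [h2]; exact (abs_add_le _ _).trans (by gcongr)
    have h4 : |u t - u a| ≤ |u t| + |u a| := abs_sub _ _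
    rw [abs_mul, abs_of_pos hδ0] at h3
    linarith
  rw [deriv_eq_D1 hu (lt_trans ha hat)]
  calc |D1 t| = δ⁻¹ * (δ * |D1 t|) := by field_simp
    _ ≤ δ⁻¹ * (|u t| + |u a| + C * δ) := by gcongr
    _ = δ⁻¹ * |u t| + δ⁻¹ * |u a| + C := by field_simp

end pointwise

lemma holder_seg {q : ℝ} (hq : 1 ≤ q) {F : ℝ → ℝ≥0∞} (hF : Measurable F) {a b : ℝ}
    (hab : a ≤ b) :
    (∫⁻ s in Set.Ioo a b, F s) ^ q
      ≤ ENNReal.ofReal (b - a) ^ (q - 1) * ∫⁻ s in Set.Ioo a b, F s ^ q := by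
  rcases eq_or_lt_of_le hq with h1 | h1
  · simp [← h1]
  · set q' := q / (q - 1) with hq'
    have hpq : q.HolderConjugate q' := (Real.holderConjugate_iff_eq_conjExponent h1).2 rfl
    have hq0 : q ≠ 0 := by linarith
    have hH := ENNReal.lintegral_mul_le_Lp_mul_Lq (volume.restrict (Set.Ioo a b)) hpq
      hF.aemeasurable aemeasurable_const (g := fun _ => (1 : ℝ≥0∞))
    simp only [mul_one, ENNReal.one_rpow, Pi.mul_apply] at hH
    have hH2 : ∫⁻ s in Set.Ioo a b, F s
        ≤ (∫⁻ s in Set.Ioo a b, F s ^ q) ^ (1 / q) * ENNReal.ofReal (b - a) ^ (1 / q') := by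
      calc ∫⁻ s in Set.Ioo a b, F s ≤ _ := hH
        _ = (∫⁻ s in Set.Ioo a b, F s ^ q) ^ (1 / q) * ENNReal.ofReal (b - a) ^ (1 / q') := by
            rw [setLIntegral_const, Real.volume_Ioo, one_mul]
    calc (∫⁻ s in Set.Ioo a b, F s) ^ q
        ≤ ((∫⁻ s in Set.Ioo a b, F s ^ q) ^ (1 / q) * ENNReal.ofReal (b - a) ^ (1 / q')) ^ q :=
          ENNReal.rpow_le_rpow hH2 (by linarith)
      _ = (∫⁻ s in Set.Ioo a b, F s ^ q) * ENNReal.ofReal (b - a) ^ (q - 1) := by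
          rw [ENNReal.mul_rpow_of_nonneg _ _ (by linarith : (0:ℝ) ≤ q), ← ENNReal.rpow_mul,
            ← ENNReal.rpow_mul, one_div_mul_cancel hq0, ENNReal.rpow_one]
          congr 1
          rw [hq']
          field_simp
      _ = _ := mul_comm _ _

lemma translate_lint (h : ℝ → ℝ≥0∞) (ε T : ℝ) :
    ∫⁻ t in Set.Ioo ε T, h (t - ε) = ∫⁻ t in Set.Ioo 0 (T - ε), h t := by
  have hmp : MeasurePreserving (fun t : ℝ => t - ε) volume volume :=
    measurePreserving_sub_right volume ε
  have hemb : MeasurableEmbedding (fun t : ℝ => t - ε) :=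
    (Homeomorph.subRight ε).measurableEmbedding
  rw [hmp.setLIntegral_comp_emb hemb h (Set.Ioo ε T)]
  congr 1
  rw [show (fun t : ℝ => t - ε) = (fun t : ℝ => t + (-ε)) by funext t; ring,
    Set.image_add_const_Ioo]
  norm_num [sub_eq_add_neg]

lemma pull_const {c : ℝ≥0∞} (hc : c ≠ ∞) {p : ℝ} (hp0 : 0 < p) (μ : Measure ℝ) (f : ℝ → ℝ≥0∞) :
    (∫⁻ t, (c * f t) ^ p ∂μ) ^ (1/p) = c * (∫⁻ t, f t ^ p ∂μ) ^ (1/p) := by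
  simp_rw [ENNReal.mul_rpow_of_nonneg _ _ hp0.le]
  rw [lintegral_const_mul' _ _ (ENNReal.rpow_ne_top_of_nonneg hp0.le hc),
    ENNReal.mul_rpow_of_nonneg _ _ (by positivity : (0:ℝ) ≤ 1/p), ← ENNReal.rpow_mul,
    mul_one_div, div_self hp0.ne', ENNReal.rpow_one]

section main
open scoped ENNReal NNReal

set_option maxHeartbeats 2000000 in
/-- Interpolation inequality `‖u′‖_{L_p(0,T)} ≤ N ε⁻¹ ‖u‖_{L_p(0,T)}
 + ε ‖u″‖_{L_p(0,T)}` for `u ∈ C²([0,∞))` with `u(0) = u′(0) = 0`, with an absolute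
constant `N` independent of `u`, `p`, `ε`, and `T`. -/
theorem stmt19 :
    ∃ N : ℝ, 0 < N ∧
      ∀ (p T ε : ℝ), 1 ≤ p → 0 < T → 0 < ε →
        ∀ u : ℝ → ℝ, ContDiffOn ℝ 2 u (Set.Ici 0) →
          u 0 = 0 → derivWithin u (Set.Ici 0) 0 = 0 →
          eLpNorm (deriv u) (ENNReal.ofReal p) (volume.restrict (Set.Ioo (0 : ℝ) T))
            ≤ ENNReal.ofReal (N * ε⁻¹) *
                eLpNorm u (ENNReal.ofReal p) (volume.restrict (Set.Ioo (0 : ℝ) T))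
              + ENNReal.ofReal ε *
                eLpNorm (deriv (deriv u)) (ENNReal.ofReal p)
                  (volume.restrict (Set.Ioo (0 : ℝ) T)) := by
  refine ⟨2, by norm_num, ?_⟩
  intro p T ε hp hT hε u hu hu0 hu0'
  set μ := volume.restrict (Set.Ioo (0:ℝ) T) with hμ
  have hp0 : (0:ℝ) < p := lt_of_lt_of_le one_pos hp
  have hP0 : ENNReal.ofReal p ≠ 0 := by
    simp only [ne_eq, ENNReal.ofReal_eq_zero, not_le]; linarith
  have hPt : ENNReal.ofReal p ≠ ∞ := ENNReal.ofReal_ne_top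
  have hPreal : (ENNReal.ofReal p).toReal = p := ENNReal.toReal_ofReal hp0.le
  set U : ℝ → ℝ≥0∞ := fun t => (‖u t‖₊ : ℝ≥0∞) with hU
  set W : ℝ → ℝ≥0∞ := fun s => (‖deriv (deriv u) s‖₊ : ℝ≥0∞) with hW
  set F : ℝ → ℝ≥0∞ := Set.indicator (Set.Ioo 0 T) W with hFdef
  set c : ℝ≥0∞ := ENNReal.ofReal ε⁻¹ with hc
  set G1 : ℝ → ℝ≥0∞ := fun t => c * U t with hG1
  set G2 : ℝ → ℝ≥0∞ := Set.indicator (Set.Ioi ε) (fun t => c * U (t - ε)) with hG2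
  set G3 : ℝ → ℝ≥0∞ := fun t => ∫⁻ s in Set.Ioo (t - ε) t, F s with hG3
  have hWmeas : Measurable W := (measurable_deriv _).nnnorm.coe_nnreal_ennreal
  have hFmeas : Measurable F := hWmeas.indicator measurableSet_Ioo
  have hcne : c ≠ ∞ := ENNReal.ofReal_ne_top
  -- conversion of the real interval integral into a lintegral of F
  have hconv : ∀ a t : ℝ, 0 ≤ a → a < t → t ≤ T →
      ENNReal.ofReal (∫ s in a..t, |derivWithin (derivWithin u (Set.Ici 0)) (Set.Ici 0) s|)
        = ∫⁻ s in Set.Ioo a t, F s := by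
    intro a t ha hat htT
    have hint : IntegrableOn
        (fun s => |derivWithin (derivWithin u (Set.Ici 0)) (Set.Ici 0) s|) (Set.Ioc a t) := by
      apply (ContinuousOn.integrableOn_Icc ?_).mono_set Set.Ioc_subset_Icc_self
      exact ((cont_D2 hu).mono (fun x hx => le_trans ha hx.1)).abs
    rw [intervalIntegral.integral_of_le hat.le,
      ofReal_integral_eq_lintegral_ofReal hint (Filter.Eventually.of_forall fun s => abs_nonneg _),
      ← MeasureTheory.restrict_Ioo_eq_restrict_Ioc]
    apply setLIntegral_congr_fun measurableSet_Ioo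
    intro s hs
    have hs0 : 0 < s := lt_of_le_of_lt ha hs.1
    have hsT : s ∈ Set.Ioo (0:ℝ) T := ⟨hs0, lt_of_lt_of_le hs.2 htT⟩
    simp only [hFdef]
    rw [Set.indicator_of_mem hsT]
    simp only [hW]
    rw [← enorm_eq_nnnorm, Real.enorm_eq_ofReal_abs, deriv2_eq_D2 hu hs0]
  -- pointwise bound
  have hpt : ∀ t ∈ Set.Ioo (0:ℝ) T, (‖deriv u t‖₊ : ℝ≥0∞) ≤ G1 t + G2 t + G3 t := by
    rintro t ⟨ht0, htT⟩
    rcases le_or_gt t ε with hcase | hcase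
    · have h := L1 hu hu0' ht0
      have h2 : (‖deriv u t‖₊ : ℝ≥0∞) ≤ ∫⁻ s in Set.Ioo 0 t, F s := by
        rw [← enorm_eq_nnnorm, Real.enorm_eq_ofReal_abs, ← hconv 0 t le_rfl ht0 htT.le]
        exact ENNReal.ofReal_le_ofReal h
      calc (‖deriv u t‖₊ : ℝ≥0∞) ≤ ∫⁻ s in Set.Ioo 0 t, F s := h2
        _ ≤ G3 t := lintegral_mono_set (Set.Ioo_subset_Ioo (by linarith) le_rfl)
        _ ≤ G1 t + G2 t + G3 t := le_add_self
    · have ha : 0 < t - ε := by linarith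
      have h := L2 hu ha (by linarith : t - ε < t)
      rw [show t - (t - ε) = ε by ring] at h
      have e1 : ENNReal.ofReal (ε⁻¹ * |u t|) = G1 t := by
        simp only [hG1, hc, hU]
        rw [ENNReal.ofReal_mul (inv_nonneg.2 hε.le), ← enorm_eq_nnnorm, Real.enorm_eq_ofReal_abs]
      have e2 : ENNReal.ofReal (ε⁻¹ * |u (t - ε)|) = G2 t := by
        simp only [hG2, hc, hU]
        rw [Set.indicator_of_mem (Set.mem_Ioi.2 hcase),
          ENNReal.ofReal_mul (inv_nonneg.2 hε.le), ← enorm_eq_nnnorm, Real.enorm_eq_ofReal_abs]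
      have e3 : ENNReal.ofReal
          (∫ s in (t-ε)..t, |derivWithin (derivWithin u (Set.Ici 0)) (Set.Ici 0) s|) = G3 t :=
        hconv (t-ε) t ha.le (by linarith) htT.le
      calc (‖deriv u t‖₊ : ℝ≥0∞) = ENNReal.ofReal |deriv u t| := Real.enorm_eq_ofReal_abs _
        _ ≤ ENNReal.ofReal (ε⁻¹ * |u t| + ε⁻¹ * |u (t-ε)|
              + ∫ s in (t-ε)..t, |derivWithin (derivWithin u (Set.Ici 0)) (Set.Ici 0) s|) :=
            ENNReal.ofReal_le_ofReal h
        _ ≤ ENNReal.ofReal (ε⁻¹ * |u t| + ε⁻¹ * |u (t-ε)|)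
              + ENNReal.ofReal (∫ s in (t-ε)..t,
                  |derivWithin (derivWithin u (Set.Ici 0)) (Set.Ici 0) s|) := ENNReal.ofReal_add_le
        _ ≤ (ENNReal.ofReal (ε⁻¹ * |u t|) + ENNReal.ofReal (ε⁻¹ * |u (t-ε)|))
              + ENNReal.ofReal (∫ s in (t-ε)..t,
                  |derivWithin (derivWithin u (Set.Ici 0)) (Set.Ici 0) s|) := by
            gcongr
            exact ENNReal.ofReal_add_le
        _ = G1 t + G2 t + G3 t := by rw [e1, e2, e3]
  -- measurability
  have hUm : AEMeasurable U μ := by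
    have hcu : ContinuousOn u (Set.Ioo 0 T) := hu.continuousOn.mono (fun x hx => hx.1.le)
    exact (hcu.aemeasurable measurableSet_Ioo).nnnorm.coe_nnreal_ennreal
  have hG1m : AEMeasurable G1 μ := aemeasurable_const.mul hUm
  have hG2m : AEMeasurable G2 μ := by
    rw [hG2]
    apply (aemeasurable_indicator_iff measurableSet_Ioi).2
    have hcomp : ContinuousOn (fun t : ℝ => u (t - ε)) (Set.Ici ε) := by
      apply hu.continuousOn.comp ((continuous_id.sub continuous_const).continuousOn)
      intro x hx
      simp only [Set.mem_Ici, id, Pi.sub_apply, id_eq] at hx ⊢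
      linarith
    have h1 : AEMeasurable (fun t => c * U (t - ε)) (volume.restrict (Set.Ici ε)) := by
      simp only [hU, hc]
      exact aemeasurable_const.mul
        ((hcomp.aemeasurable measurableSet_Ici).nnnorm.coe_nnreal_ennreal)
    apply h1.mono_measure
    rw [hμ]
    have heq : (volume.restrict (Set.Ioo (0:ℝ) T)).restrict (Set.Ioi ε)
        = volume.restrict (Set.Ioi ε ∩ Set.Ioo (0:ℝ) T) :=
      Measure.restrict_restrict measurableSet_Ioi
    calc (volume.restrict (Set.Ioo (0:ℝ) T)).restrict (Set.Ioi ε)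
        = volume.restrict (Set.Ioi ε ∩ Set.Ioo (0:ℝ) T) := heq
      _ ≤ volume.restrict (Set.Ici ε) :=
        Measure.restrict_mono (Set.inter_subset_left.trans Set.Ioi_subset_Ici_self) le_rfl
  have hset : MeasurableSet {q : ℝ × ℝ | q.1 - ε < q.2 ∧ q.2 < q.1} :=
    (measurableSet_lt (measurable_fst.sub measurable_const) measurable_snd).inter
      (measurableSet_lt measurable_snd measurable_fst)
  have hG3meas : Measurable G3 := by
    have hker : Measurable (Function.uncurry fun t s => Set.indicator (Set.Ioo (t - ε) t) F s) := by
      have heq : (Function.uncurry fun t s => Set.indicator (Set.Ioo (t-ε) t) F s)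
          = Set.indicator {q : ℝ×ℝ | q.1 - ε < q.2 ∧ q.2 < q.1} (fun q => F q.2) := by
        funext q
        simp [Function.uncurry, Set.indicator_apply, Set.mem_Ioo, Set.mem_setOf_eq]
      rw [heq]
      exact (hFmeas.comp measurable_snd).indicator hset
    have heq2 : G3 = fun t => ∫⁻ s, Set.indicator (Set.Ioo (t-ε) t) F s ∂volume := by
      funext t
      simp only [hG3]
      exact (lintegral_indicator measurableSet_Ioo F).symm
    rw [heq2]
    exact hker.lintegral_prod_right'
  have hG3m : AEMeasurable G3 μ := hG3meas.aemeasurable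
  -- main chain
  have key1 : eLpNorm (deriv u) (ENNReal.ofReal p) μ
      ≤ (∫⁻ t, (G1 t + G2 t + G3 t) ^ p ∂μ) ^ (1/p) := by
    rw [eLpNorm_eq_lintegral_rpow_enorm_toReal hP0 hPt, hPreal]
    apply ENNReal.rpow_le_rpow _ (by positivity : (0:ℝ) ≤ 1/p)
    apply lintegral_mono_ae
    rw [hμ]
    apply (ae_restrict_iff' measurableSet_Ioo).2
    apply Filter.Eventually.of_forall
    intro t ht
    exact ENNReal.rpow_le_rpow (hpt t ht) hp0.le
  have tri : (∫⁻ t, (G1 t + G2 t + G3 t) ^ p ∂μ) ^ (1/p)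
      ≤ (∫⁻ t, G1 t ^ p ∂μ) ^ (1/p) + (∫⁻ t, G2 t ^ p ∂μ) ^ (1/p)
        + (∫⁻ t, G3 t ^ p ∂μ) ^ (1/p) := by
    calc (∫⁻ t, (G1 t + G2 t + G3 t) ^ p ∂μ) ^ (1/p)
        ≤ (∫⁻ t, (G1 t + G2 t) ^ p ∂μ) ^ (1/p) + (∫⁻ t, G3 t ^ p ∂μ) ^ (1/p) :=
          ENNReal.lintegral_Lp_add_le (hG1m.add hG2m) hG3m hp
      _ ≤ ((∫⁻ t, G1 t ^ p ∂μ) ^ (1/p) + (∫⁻ t, G2 t ^ p ∂μ) ^ (1/p))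
            + (∫⁻ t, G3 t ^ p ∂μ) ^ (1/p) := by
          gcongr
          exact ENNReal.lintegral_Lp_add_le hG1m hG2m hp
  -- term 1
  have hB1 : (∫⁻ t, G1 t ^ p ∂μ) ^ (1/p) = c * eLpNorm u (ENNReal.ofReal p) μ := by
    rw [eLpNorm_eq_lintegral_rpow_enorm_toReal hP0 hPt, hPreal]
    simp only [hG1, hU]
    exact pull_const hcne hp0 μ _
  -- term 2
  have hB2 : (∫⁻ t, G2 t ^ p ∂μ) ^ (1/p) ≤ c * eLpNorm u (ENNReal.ofReal p) μ := by
    rw [eLpNorm_eq_lintegral_rpow_enorm_toReal hP0 hPt, hPreal]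
    have step1 : ∫⁻ t, G2 t ^ p ∂μ = ∫⁻ t in Set.Ioo ε T, (c * U (t - ε)) ^ p ∂volume := by
      have hind : ∀ t:ℝ, G2 t ^ p
          = Set.indicator (Set.Ioi ε) (fun t => (c * U (t-ε)) ^ p) t := by
        intro t
        simp only [hG2, Set.indicator_apply]
        by_cases h : t ∈ Set.Ioi ε
        · rw [if_pos h, if_pos h]
        · rw [if_neg h, if_neg h, ENNReal.zero_rpow_of_pos hp0]
      have hseteq : Set.Ioi ε ∩ Set.Ioo (0:ℝ) T = Set.Ioo ε T := by
        ext x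
        simp only [Set.mem_inter_iff, Set.mem_Ioi, Set.mem_Ioo]
        constructor
        · rintro ⟨h1, _, h3⟩; exact ⟨h1, h3⟩
        · rintro ⟨h1, h2⟩; exact ⟨h1, by linarith, h2⟩
      rw [lintegral_congr hind, lintegral_indicator measurableSet_Ioi, hμ,
        Measure.restrict_restrict measurableSet_Ioi, hseteq]
    rw [step1, translate_lint (fun r => (c * U r) ^ p) ε T]
    calc (∫⁻ r in Set.Ioo 0 (T - ε), (c * U r) ^ p ∂volume) ^ (1/p)
        ≤ (∫⁻ r in Set.Ioo 0 T, (c * U r) ^ p ∂volume) ^ (1/p) := by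
          apply ENNReal.rpow_le_rpow _ (by positivity : (0:ℝ) ≤ 1/p)
          exact lintegral_mono_set (Set.Ioo_subset_Ioo le_rfl (by linarith))
      _ = c * (∫⁻ r in Set.Ioo 0 T, U r ^ p ∂volume) ^ (1/p) :=
          pull_const hcne hp0 _ _
      _ = _ := by rw [hμ]; rfl
  -- term 3
  have hB3 : (∫⁻ t, G3 t ^ p ∂μ) ^ (1/p)
      ≤ ENNReal.ofReal ε * eLpNorm (deriv (deriv u)) (ENNReal.ofReal p) μ := by
    rw [eLpNorm_eq_lintegral_rpow_enorm_toReal hP0 hPt, hPreal]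
    set e := ENNReal.ofReal ε with he
    have hene : e ≠ ∞ := ENNReal.ofReal_ne_top
    have he0 : e ≠ 0 := by
      simp only [he, ne_eq, ENNReal.ofReal_eq_zero, not_le]; linarith
    set Fp : ℝ → ℝ≥0∞ := fun s => F s ^ p with hFp
    have hFpmeas : Measurable Fp := hFmeas.pow_const p
    have hFpne : ∀ s, Fp s ≠ ∞ := by
      intro s
      apply ENNReal.rpow_ne_top_of_nonneg hp0.le
      simp only [hFdef, hW, Set.indicator_apply]
      split <;> simp
    have step1 : ∫⁻ t, G3 t ^ p ∂μ
        ≤ e ^ (p-1) * ∫⁻ t, (∫⁻ s in Set.Ioo (t-ε) t, Fp s ∂volume) ∂μ := by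
      calc ∫⁻ t, G3 t ^ p ∂μ
          ≤ ∫⁻ t, e ^ (p-1) * ∫⁻ s in Set.Ioo (t-ε) t, Fp s ∂volume ∂μ := by
            apply lintegral_mono
            intro t
            have hh := holder_seg hp hFmeas (by linarith : t - ε ≤ t)
            simpa [hG3, he, hFp, show t - (t - ε) = ε by ring] using hh
        _ = _ := lintegral_const_mul' _ _
              (ENNReal.rpow_ne_top_of_nonneg (by linarith : (0:ℝ) ≤ p - 1) hene)
    have fub : ∫⁻ t, (∫⁻ s in Set.Ioo (t-ε) t, Fp s ∂volume) ∂μ ≤ e * ∫⁻ s, Fp s ∂volume := by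
      have swap : ∫⁻ t, (∫⁻ s, Set.indicator (Set.Ioo (t-ε) t) Fp s ∂volume) ∂μ
          = ∫⁻ s, (∫⁻ t, Set.indicator (Set.Ioo (t-ε) t) Fp s ∂μ) ∂volume := by
        apply lintegral_lintegral_swap
        have hker : (Function.uncurry fun t s => Set.indicator (Set.Ioo (t-ε) t) Fp s)
            = Set.indicator {q : ℝ×ℝ | q.1 - ε < q.2 ∧ q.2 < q.1} (fun q => Fp q.2) := by
          funext q
          simp [Function.uncurry, Set.indicator_apply, Set.mem_Ioo, Set.mem_setOf_eq]
        rw [hker]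
        exact ((hFpmeas.comp measurable_snd).indicator hset).aemeasurable
      calc ∫⁻ t, (∫⁻ s in Set.Ioo (t-ε) t, Fp s ∂volume) ∂μ
          = ∫⁻ t, (∫⁻ s, Set.indicator (Set.Ioo (t-ε) t) Fp s ∂volume) ∂μ := by
            apply lintegral_congr
            intro t
            rw [lintegral_indicator measurableSet_Ioo]
        _ = ∫⁻ s, (∫⁻ t, Set.indicator (Set.Ioo (t-ε) t) Fp s ∂μ) ∂volume := swap
        _ ≤ ∫⁻ s, Fp s * e ∂volume := by
            apply lintegral_mono
            intro s
            have heq : ∀ t:ℝ, Set.indicator (Set.Ioo (t-ε) t) Fp s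
                = Fp s * Set.indicator (Set.Ioo s (s+ε)) (fun _ => (1:ℝ≥0∞)) t := by
              intro t
              simp only [Set.indicator_apply, Set.mem_Ioo]
              by_cases h : t - ε < s ∧ s < t
              · rw [if_pos h, if_pos ⟨h.2, by linarith [h.1]⟩, mul_one]
              · rw [if_neg h, if_neg, mul_zero]
                intro hcon
                exact h ⟨by linarith [hcon.2], hcon.1⟩
            calc ∫⁻ t, Set.indicator (Set.Ioo (t-ε) t) Fp s ∂μ
                = ∫⁻ t, Fp s * Set.indicator (Set.Ioo s (s+ε)) (fun _ => (1:ℝ≥0∞)) t ∂μ :=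
                  lintegral_congr heq
              _ = Fp s * ∫⁻ t, Set.indicator (Set.Ioo s (s+ε)) (fun _ => (1:ℝ≥0∞)) t ∂μ :=
                  lintegral_const_mul' _ _ (hFpne s)
              _ ≤ Fp s * e := by
                  gcongr
                  rw [lintegral_indicator measurableSet_Ioo, setLIntegral_one, hμ,
                    Measure.restrict_apply measurableSet_Ioo]
                  calc volume (Set.Ioo s (s+ε) ∩ Set.Ioo 0 T)
                      ≤ volume (Set.Ioo s (s+ε)) := measure_mono Set.inter_subset_left
                    _ = e := by rw [Real.volume_Ioo, he]; congr 1; ring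
        _ = e * ∫⁻ s, Fp s ∂volume := by
            rw [lintegral_mul_const' e _ hene, mul_comm]
    have step3 : ∫⁻ s, Fp s ∂volume = ∫⁻ s in Set.Ioo 0 T, W s ^ p ∂volume := by
      have hind : ∀ s:ℝ, Fp s = Set.indicator (Set.Ioo 0 T) (fun s => W s ^ p) s := by
        intro s
        simp only [hFp, hFdef, Set.indicator_apply]
        by_cases h : s ∈ Set.Ioo (0:ℝ) T
        · rw [if_pos h, if_pos h]
        · rw [if_neg h, if_neg h, ENNReal.zero_rpow_of_pos hp0]
      rw [lintegral_congr hind, lintegral_indicator measurableSet_Ioo]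
    calc (∫⁻ t, G3 t ^ p ∂μ) ^ (1/p)
        ≤ (e ^ (p-1) * (e * ∫⁻ s in Set.Ioo 0 T, W s ^ p ∂volume)) ^ (1/p) := by
          apply ENNReal.rpow_le_rpow _ (by positivity : (0:ℝ) ≤ 1/p)
          refine step1.trans ?_
          gcongr
          exact fub.trans_eq (by rw [step3])
      _ = (e ^ p * ∫⁻ s in Set.Ioo 0 T, W s ^ p ∂volume) ^ (1/p) := by
          rw [← mul_assoc]
          congr 2
          rw [← ENNReal.rpow_one e, ← ENNReal.rpow_mul, ← ENNReal.rpow_add _ _ he0 hene]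
          norm_num
      _ = e * (∫⁻ s in Set.Ioo 0 T, W s ^ p ∂volume) ^ (1/p) := by
          rw [ENNReal.mul_rpow_of_nonneg _ _ (by positivity : (0:ℝ) ≤ 1/p),
            ← ENNReal.rpow_mul, mul_one_div, div_self hp0.ne', ENNReal.rpow_one]
      _ = _ := by rw [hμ]; rfl
  -- combine everything
  have hc2 : ENNReal.ofReal (2 * ε⁻¹) = 2 * c := by
    rw [ENNReal.ofReal_mul (by norm_num : (0:ℝ) ≤ 2), hc, ENNReal.ofReal_ofNat]
  calc eLpNorm (deriv u) (ENNReal.ofReal p) μ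
      ≤ (∫⁻ t, (G1 t + G2 t + G3 t) ^ p ∂μ) ^ (1/p) := key1
    _ ≤ (∫⁻ t, G1 t ^ p ∂μ) ^ (1/p) + (∫⁻ t, G2 t ^ p ∂μ) ^ (1/p)
        + (∫⁻ t, G3 t ^ p ∂μ) ^ (1/p) := tri
    _ ≤ (c * eLpNorm u (ENNReal.ofReal p) μ + c * eLpNorm u (ENNReal.ofReal p) μ)
        + ENNReal.ofReal ε * eLpNorm (deriv (deriv u)) (ENNReal.ofReal p) μ :=
      add_le_add (add_le_add hB1.le hB2) hB3
    _ = ENNReal.ofReal (2 * ε⁻¹) * eLpNorm u (ENNReal.ofReal p) μ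
        + ENNReal.ofReal ε * eLpNorm (deriv (deriv u)) (ENNReal.ofReal p) μ := by
      rw [hc2, ← two_mul, mul_assoc]


end main
end
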